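/- Brandes' one-sided dependency recursion: for a fixed source s in a finite directed acyclic shortest-path DAG, the dependency δ(s|v) := Σ_{t ∈ V} δ(s,t|v) satisfies δ(s|v) = Σ_{w : (v,w)∈E, d(s,w)=d(s,v)+1} (σ(s,v)/σ(s,w)) · (1 + δ(s|w)). -/

import Mathlib

/-- Walks from `s` to `t`, encoded by the list of vertices following `s`. -/
def DChains {V : Type*} (E : V → V → Prop) (s t : V) : Set (List V) :=
  {p | List.Chain E s p ∧ (s :: p).getLast (List.cons_ne_nil s p) = t}

/-- Shortest-path distance (number of edges), `⊤` if unreachable. -/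
noncomputable def dEDist {V : Type*} (E : V → V → Prop) (s t : V) : ℕ∞ :=
  sInf ((fun p : List V => (p.length : ℕ∞)) '' DChains E s t)

/-- The set of shortest paths from `s` to `t`. -/
def SPaths {V : Type*} (E : V → V → Prop) (s t : V) : Set (List V) :=
  {p ∈ DChains E s t | (p.length : ℕ∞) = dEDist E s t}

/-- `σ(s,t)`: the number of shortest paths from `s` to `t`. -/
noncomputable def numSP {V : Type*} (E : V → V → Prop) (s t : V) : ℕ :=
  (SPaths E s t).ncard

/-- `σ(s,t|v)`: the number of shortest `s`-`t` paths containing `v` as an internal vertex. -/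
noncomputable def numSPThru {V : Type*} (E : V → V → Prop) (s t v : V) : ℕ :=
  {p ∈ SPaths E s t | v ∈ (s :: p) ∧ v ≠ s ∧ v ≠ t}.ncard

/-- The pair-dependency `δ(s,t|v)` (`0` when `σ(s,t) = 0`). -/
noncomputable def pairDep {V : Type*} (E : V → V → Prop) (s t v : V) : ℝ :=
  if 0 < numSP E s t then (numSPThru E s t v : ℝ) / (numSP E s t : ℝ) else 0

/-- The one-sided dependency `δ(s|v) = Σ_t δ(s,t|v)`. -/
noncomputable def oneDep {V : Type*} [Fintype V] (E : V → V → Prop) (s v : V) : ℝ :=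
  ∑ t : V, pairDep E s t v

namespace Brandes

variable {V : Type*} {E : V → V → Prop} {s t u v w : V}

theorem mem_dchains {p : List V} :
    p ∈ DChains E s t ↔ List.Chain E s p ∧ (s :: p).getLast? = some t := by
  show List.Chain E s p ∧ _ ↔ _
  rw [List.getLast_eq_iff_getLast?_eq_some]

theorem dchains_nil : ([] : List V) ∈ DChains E s s :=
  mem_dchains.mpr ⟨List.Chain.nil, rfl⟩

theorem dEDist_le {p : List V} (hp : p ∈ DChains E s t) :
    dEDist E s t ≤ (p.length : ℕ∞) :=
  sInf_le ⟨p, hp, rfl⟩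

theorem chain'_iff {p : List V} : List.Chain E s p ↔ List.Chain' E (s :: p) := Iff.rfl

theorem dchains_append {p q : List V} (hp : p ∈ DChains E s u) (hq : q ∈ DChains E u t) :
    p ++ q ∈ DChains E s t := by
  rw [mem_dchains] at *
  obtain ⟨hc₁, hl₁⟩ := hp
  obtain ⟨hc₂, hl₂⟩ := hq
  constructor
  · rw [chain'_iff, show s :: (p ++ q) = (s :: p) ++ q from rfl, List.Chain']
    rw [List.isChain_append]
    refine ⟨hc₁, (List.isChain_cons.mp (chain'_iff.mp hc₂)).2, ?_⟩
    intro x hx y hy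
    rw [hl₁] at hx
    cases hx
    exact (List.isChain_cons.mp (chain'_iff.mp hc₂)).1 y hy
  · rw [show s :: (p ++ q) = (s :: p) ++ q from rfl, List.getLast?_append]
    cases q with
    | nil => simpa using hl₁.trans (by simpa using hl₂)
    | cons b l => simp only [List.getLast?_cons_cons] at hl₂ ⊢; rw [hl₂]; rfl

theorem dchains_nonempty (h : Relation.ReflTransGen E s t) : (DChains E s t).Nonempty := by
  induction h with
  | refl => exact ⟨[], dchains_nil⟩
  | tail _ hbc ih =>
    obtain ⟨p, hp⟩ := ih
    exact ⟨p ++ [_], dchains_append hp (mem_dchains.mpr ⟨List.Chain.cons hbc List.Chain.nil, rfl⟩)⟩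

theorem dEDist_ne_top (h : Relation.ReflTransGen E s t) : dEDist E s t ≠ ⊤ := by
  obtain ⟨p, hp⟩ := dchains_nonempty h
  intro htop
  have := dEDist_le hp
  rw [htop] at this
  exact absurd (top_le_iff.mp this) (by simp)

theorem spaths_nonempty (h : dEDist E s t ≠ ⊤) : (SPaths E s t).Nonempty := by
  have hne : ((fun p : List V => (p.length : ℕ∞)) '' DChains E s t).Nonempty := by
    by_contra hc
    rw [Set.not_nonempty_iff_eq_empty] at hc
    exact h (by simp [dEDist, hc])
  have hmem := csInf_mem hne
  obtain ⟨p, hp, hx⟩ := hmem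
  exact ⟨p, hp, hx⟩

theorem dEDist_eq_of_spath {p : List V} (hp : p ∈ SPaths E s t) :
    dEDist E s t = (p.length : ℕ∞) := hp.2.symm

theorem dEDist_ne_top_of_spath {p : List V} (hp : p ∈ SPaths E s t) :
    dEDist E s t ≠ ⊤ := by rw [dEDist_eq_of_spath hp]; simp

theorem spaths_finite [Finite V] : (SPaths E s t).Finite := by
  rcases Set.eq_empty_or_nonempty (SPaths E s t) with h | ⟨p, hp⟩
  · simp [h]
  · refine (List.finite_length_eq V p.length).subset ?_
    intro q hq
    have := (dEDist_eq_of_spath hq).symm.trans (dEDist_eq_of_spath hp)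
    exact_mod_cast this

theorem numSP_pos [Finite V] (h : dEDist E s t ≠ ⊤) : 0 < numSP E s t :=
  (spaths_nonempty h).ncard_pos spaths_finite


theorem dchains_split {p l₁ l₂ : List V} (hp : p ∈ DChains E s t)
    (hdec : s :: p = l₁ ++ w :: l₂) :
    ∃ p₁, s :: p₁ = l₁ ++ [w] ∧ p₁ ∈ DChains E s w ∧ p₁.length = l₁.length ∧
      l₂ ∈ DChains E w t ∧ p = p₁ ++ l₂ := by
  rw [mem_dchains] at hp
  obtain ⟨hc, hl⟩ := hp
  -- p₁ := (l₁ ++ [w]).tail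
  have hl₁ne : l₁ ++ [w] ≠ [] := by simp
  obtain ⟨p₁, hp₁⟩ : ∃ p₁, s :: p₁ = l₁ ++ [w] := by
    cases l₁ with
    | nil =>
      simp only [List.nil_append, List.cons.injEq] at hdec ⊢
      exact ⟨[], by simp [hdec.1]⟩
    | cons a l =>
      simp only [List.cons_append, List.cons.injEq] at hdec
      exact ⟨l ++ [w], by rw [hdec.1]; rfl⟩
  have hsp : s :: p = (s :: p₁) ++ l₂ := by rw [hp₁, hdec]; simp
  have hpp : p = p₁ ++ l₂ := by
    simpa using hsp
  have hchain : List.Chain' E ((s :: p₁) ++ l₂) := by rw [← hsp]; exact chain'_iff.mp hc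
  rw [List.Chain', List.isChain_append] at hchain
  obtain ⟨hc₁, hc₂, hmid⟩ := hchain
  have hlast₁ : (s :: p₁).getLast? = some w := by rw [hp₁]; exact List.getLast?_concat
  refine ⟨p₁, hp₁, mem_dchains.mpr ⟨hc₁, hlast₁⟩, ?_, mem_dchains.mpr ⟨?_, ?_⟩, hpp⟩
  · have := congrArg List.length hp₁
    simpa using this
  · -- Chain E w l₂
    rw [chain'_iff, List.Chain']
    cases l₂ with
    | nil => simp
    | cons b l =>
      rw [List.isChain_cons]
      refine ⟨?_, ?_⟩
      · intro y hy
        cases hy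
        exact hmid w hlast₁ b rfl
      · exact hc₂
  · -- (w :: l₂).getLast? = some t
    rw [← hl, hsp, List.getLast?_append]
    cases l₂ with
    | nil => simp [hlast₁]
    | cons b l =>
      rw [List.getLast?_cons_cons]
      obtain ⟨x, hx⟩ : ∃ x, (b :: l).getLast? = some x :=
        ⟨_, List.getLast?_eq_getLast (by simp)⟩
      simp [hx]

theorem pos_eq {p l₁ l₂ : List V} (hp : p ∈ SPaths E s t)
    (hdec : s :: p = l₁ ++ w :: l₂) :
    dEDist E s w = (l₁.length : ℕ∞) := by
  obtain ⟨p₁, hp₁, hmem₁, hlen₁, hmem₂, hpp⟩ := dchains_split hp.1 hdec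
  have hle : dEDist E s w ≤ (l₁.length : ℕ∞) := hlen₁ ▸ dEDist_le hmem₁
  obtain ⟨q, hq⟩ := spaths_nonempty (fun htop => absurd (htop ▸ hle) (by simp))
  have hqd : dEDist E s t ≤ ((q ++ l₂).length : ℕ∞) := dEDist_le (dchains_append hq.1 hmem₂)
  have hlen : p.length = l₁.length + l₂.length := by
    rw [hpp]; simp [hlen₁]
  rw [← hp.2] at hqd
  simp only [List.length_append, Nat.cast_add, hlen] at hqd
  have h2 : (l₁.length : ℕ∞) ≤ q.length := by
    exact (WithTop.add_le_add_iff_right (z := (l₂.length : ℕ∞))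
      (by exact WithTop.natCast_ne_top _)).mp hqd
  exact le_antisymm hle (hq.2 ▸ h2)

/-- prefix of a shortest path is a shortest path, suffix has complementary length -/
theorem spath_split {p l₁ l₂ : List V} (hp : p ∈ SPaths E s t)
    (hdec : s :: p = l₁ ++ w :: l₂) :
    ∃ p₁, s :: p₁ = l₁ ++ [w] ∧ p₁ ∈ SPaths E s w ∧ l₂ ∈ DChains E w t ∧
      p = p₁ ++ l₂ ∧ dEDist E s w + (l₂.length : ℕ∞) = dEDist E s t := by
  obtain ⟨p₁, hp₁, hmem₁, hlen₁, hmem₂, hpp⟩ := dchains_split hp.1 hdec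
  have hposw := pos_eq hp hdec
  have hlen : p.length = l₁.length + l₂.length := by
    rw [hpp]; simp [hlen₁]
  refine ⟨p₁, hp₁, ⟨hmem₁, by rw [hposw, hlen₁]⟩, hmem₂, hpp, ?_⟩
  rw [hposw, ← hp.2, hlen]
  push_cast
  ring

def Suf (E : V → V → Prop) (s w t : V) : Set (List V) :=
  {q | q ∈ DChains E w t ∧ dEDist E s w + (q.length : ℕ∞) = dEDist E s t}

def EdgeSP (E : V → V → Prop) (s v w t : V) : Set (List V) :=
  {p ∈ SPaths E s t | ∃ l₁ l₂, s :: p = l₁ ++ v :: w :: l₂}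

theorem mem_getLast?_of_dchains {p : List V} (hp : p ∈ DChains E s t) : t ∈ s :: p := by
  have h := hp.2
  exact h ▸ List.getLast_mem _

theorem suf_finite [Finite V] (hw : dEDist E s w ≠ ⊤) : (Suf E s w t).Finite := by
  rcases Set.eq_empty_or_nonempty (Suf E s w t) with h | ⟨q₀, hq₀⟩
  · simp [h]
  · refine (List.finite_length_eq V q₀.length).subset ?_
    intro q hq
    have : (q.length : ℕ∞) = (q₀.length : ℕ∞) :=
      WithTop.add_left_cancel hw (hq.2.trans hq₀.2.symm)
    exact_mod_cast this

theorem suf_self (hw : dEDist E s w ≠ ⊤) : Suf E s w w = {[]} := by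
  ext q
  constructor
  · rintro ⟨_, hlen⟩
    have : (q.length : ℕ∞) = ((0:ℕ) : ℕ∞) := by
      have h' : dEDist E s w + (q.length : ℕ∞) = dEDist E s w + ((0:ℕ) : ℕ∞) := by
        rw [hlen]; simp
      exact WithTop.add_left_cancel hw h'
    have : q.length = 0 := by exact_mod_cast this
    simpa using List.length_eq_zero_iff.mp this
  · rintro rfl
    exact ⟨dchains_nil, by simp⟩

theorem spaths_thru_eq (t : V) (hw : dEDist E s w ≠ ⊤) :
    {p | p ∈ SPaths E s t ∧ w ∈ s :: p} =
      (fun x : List V × List V => x.1 ++ x.2) '' (SPaths E s w ×ˢ Suf E s w t) := by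
  ext p
  constructor
  · rintro ⟨hp, hmem⟩
    obtain ⟨l₁, l₂, hdec⟩ := List.append_of_mem hmem
    obtain ⟨p₁, hp₁, hsp, hd, hpp, hlen⟩ := spath_split hp hdec
    exact ⟨(p₁, l₂), ⟨hsp, hd, hlen⟩, hpp.symm⟩
  · rintro ⟨⟨a, b⟩, ⟨ha, hb, hlen⟩, rfl⟩
    refine ⟨⟨dchains_append ha.1 hb, ?_⟩, ?_⟩
    · show ((a ++ b).length : ℕ∞) = _
      rw [List.length_append]
      push_cast
      rw [ha.2, hlen]
    · show w ∈ s :: (a ++ b)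
      rw [show s :: (a ++ b) = (s :: a) ++ b from rfl]
      exact List.mem_append_left _ (mem_getLast?_of_dchains ha.1)

theorem edge_eq (t : V) (hvw : E v w) (hd : dEDist E s w = dEDist E s v + 1) :
    EdgeSP E s v w t =
      (fun x : List V × List V => x.1 ++ w :: x.2) '' (SPaths E s v ×ˢ Suf E s w t) := by
  ext p
  constructor
  · rintro ⟨hp, l₁, l₂, hdec⟩
    obtain ⟨p₁, hp₁, hsp, _, hpp, _⟩ := spath_split hp hdec
    have hdec2 : s :: p = (l₁ ++ [v]) ++ w :: l₂ := by rw [hdec]; simp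
    obtain ⟨q₁, hq₁, _, hd₂, _, hlen₂⟩ := spath_split hp hdec2
    exact ⟨(p₁, l₂), ⟨hsp, hd₂, hlen₂⟩, hpp.symm⟩
  · rintro ⟨⟨a, b⟩, ⟨ha, hb, hlen⟩, rfl⟩
    have hwb : w :: b ∈ DChains E v t := by
      rw [mem_dchains]
      refine ⟨List.chain_cons.mpr ⟨hvw, (mem_dchains.mp hb).1⟩, ?_⟩
      rw [List.getLast?_cons_cons]
      exact (mem_dchains.mp hb).2
    refine ⟨⟨dchains_append ha.1 hwb, ?_⟩, ?_⟩
    · show ((a ++ w :: b).length : ℕ∞) = _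
      rw [List.length_append, List.length_cons]
      push_cast
      rw [ha.2, ← hlen, hd]
      ring
    · -- decomposition
      have hlast : (s :: a).getLast (by simp) = v :=
        (List.getLast_eq_iff_getLast?_eq_some _).mpr (mem_dchains.mp ha.1).2
      refine ⟨(s :: a).dropLast, b, ?_⟩
      rw [show s :: (a ++ w :: b) = (s :: a) ++ w :: b from rfl]
      conv_lhs => rw [← List.dropLast_append_getLast (l := s :: a) (by simp), hlast]
      simp


theorem ncard_prod {α β : Type*} (s : Set α) (t : Set β) :
    (s ×ˢ t).ncard = s.ncard * t.ncard := by
  rw [← Nat.card_coe_set_eq, ← Nat.card_coe_set_eq, ← Nat.card_coe_set_eq,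
    Nat.card_congr (Equiv.Set.prod s t), Nat.card_prod]

theorem card_thru_w [Finite V] (t : V) (hw : dEDist E s w ≠ ⊤) :
    {p | p ∈ SPaths E s t ∧ w ∈ s :: p}.ncard = numSP E s w * (Suf E s w t).ncard := by
  have hinj : Set.InjOn (fun x : List V × List V => x.1 ++ x.2)
      (SPaths E s w ×ˢ Suf E s w t) := by
    rintro ⟨a, b⟩ ⟨ha, hb⟩ ⟨a', b'⟩ ⟨ha', hb'⟩ h
    simp only at h
    have hl : a.length = a'.length := by
      have := ha.2.trans ha'.2.symm
      exact_mod_cast this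
    obtain ⟨h1, h2⟩ := List.append_inj h hl
    simp [Prod.ext_iff, h1, h2]
  rw [spaths_thru_eq t hw, Set.ncard_image_of_injOn hinj, ncard_prod]
  rfl

theorem card_edge [Finite V] (t : V) (hvw : E v w)
    (hd : dEDist E s w = dEDist E s v + 1) :
    (EdgeSP E s v w t).ncard = numSP E s v * (Suf E s w t).ncard := by
  have hinj : Set.InjOn (fun x : List V × List V => x.1 ++ w :: x.2)
      (SPaths E s v ×ˢ Suf E s w t) := by
    rintro ⟨a, b⟩ ⟨ha, hb⟩ ⟨a', b'⟩ ⟨ha', hb'⟩ h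
    simp only at h
    have hl : a.length = a'.length := by
      have := ha.2.trans ha'.2.symm
      exact_mod_cast this
    obtain ⟨h1, h2⟩ := List.append_inj h hl
    simp only [List.cons.injEq] at h2
    simp [Prod.ext_iff, h1, h2.2]
  rw [edge_eq t hvw hd, Set.ncard_image_of_injOn hinj, ncard_prod]
  rfl

theorem edge_unique {p : List V} {w₁ w₂ : V}
    (h₁ : p ∈ EdgeSP E s v w₁ t) (h₂ : p ∈ EdgeSP E s v w₂ t) : w₁ = w₂ := by
  obtain ⟨hp, l₁, l₂, hdec₁⟩ := h₁
  obtain ⟨_, l₁', l₂', hdec₂⟩ := h₂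
  have e₁ := pos_eq hp hdec₁
  have e₂ := pos_eq hp hdec₂
  have hl : l₁.length = l₁'.length := by
    have := e₁.symm.trans e₂
    exact_mod_cast this
  have := hdec₁.symm.trans hdec₂
  obtain ⟨-, h2⟩ := List.append_inj this hl
  simp only [List.cons.injEq] at h2
  exact h2.2.1

theorem mem_thru_iff (hvs : v ≠ s) {p : List V} (hp : p ∈ SPaths E s t) :
    (v ∈ (s :: p) ∧ v ≠ s ∧ v ≠ t) ↔
      ∃ w, (E v w ∧ dEDist E s w = dEDist E s v + 1) ∧ p ∈ EdgeSP E s v w t := by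
  constructor
  · rintro ⟨hmem, -, hvt⟩
    obtain ⟨l₁, l₂, hdec⟩ := List.append_of_mem hmem
    cases l₂ with
    | nil =>
      exfalso
      apply hvt
      have h1 : (s :: p).getLast? = some t := (mem_dchains.mp hp.1).2
      have h2 : (s :: p).getLast? = some v := by rw [hdec]; exact List.getLast?_concat
      exact (Option.some.injEq _ _ ▸ (h2.symm.trans h1) : v = t)
    | cons w l₂' =>
      obtain ⟨p₁, hp₁, hsp, hdch, hpp, hlen⟩ := spath_split hp hdec
      have hvw : E v w := (List.chain_cons.mp (mem_dchains.mp hdch).1).1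
      have e₁ := pos_eq hp hdec
      have hdec2 : s :: p = (l₁ ++ [v]) ++ w :: l₂' := by rw [hdec]; simp
      have e₂ := pos_eq hp hdec2
      refine ⟨w, ⟨hvw, ?_⟩, hp, l₁, l₂', hdec⟩
      rw [e₁, e₂]
      simp [List.length_append]
  · rintro ⟨w, ⟨hvw, hd⟩, hpe⟩
    obtain ⟨-, l₁, l₂, hdec⟩ := hpe
    refine ⟨?_, hvs, ?_⟩
    · rw [hdec]
      exact List.mem_append_right _ List.mem_cons_self
    · intro hvt
      have e₁ := pos_eq hp hdec
      have e₂ : dEDist E s t = (p.length : ℕ∞) := hp.2.symm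
      have hlen : (s :: p).length = (l₁ ++ v :: w :: l₂).length := congrArg _ hdec
      simp only [List.length_cons, List.length_append] at hlen
      have : p.length = l₁.length := by
        have h3 := (hvt ▸ e₁).symm.trans e₂
        exact_mod_cast h3.symm
      omega

theorem thru_set_eq (hvs : v ≠ s) (t : V) :
    {p | p ∈ SPaths E s t ∧ v ∈ (s :: p) ∧ v ≠ s ∧ v ≠ t} =
      ⋃ w ∈ {u | E v u ∧ dEDist E s u = dEDist E s v + 1}, EdgeSP E s v w t := by
  ext p
  simp only [Set.mem_iUnion, Set.mem_setOf_eq, exists_prop]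
  constructor
  · rintro ⟨hp, h⟩
    exact (mem_thru_iff hvs hp).mp h
  · rintro ⟨w, hw, he⟩
    exact ⟨he.1, (mem_thru_iff hvs he.1).mpr ⟨w, hw, he⟩⟩


theorem dEDist_self : dEDist E s s = 0 := by
  refine le_antisymm ?_ zero_le
  simpa using dEDist_le (dchains_nil (E := E) (s := s))

theorem succ_ne_source (hd : dEDist E s w = dEDist E s v + 1) : w ≠ s := by
  rintro rfl
  rw [dEDist_self] at hd
  exact absurd hd.symm (by simp)

theorem pairDep_self_right : pairDep E s t t = 0 := by
  unfold pairDep numSPThru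
  have : {p ∈ SPaths E s t | t ∈ (s :: p) ∧ t ≠ s ∧ t ≠ t} = ∅ := by
    ext p; simp
  rw [this]
  simp

theorem card_thru_sum [Fintype V] (hvs : v ≠ s) (t : V) :
    numSPThru E s t v =
      ∑ w ∈ (Set.toFinite {u : V | E v u ∧ dEDist E s u = dEDist E s v + 1}).toFinset,
        (EdgeSP E s v w t).ncard := by
  classical
  have hfin : ∀ w : V, (EdgeSP E s v w t).Finite :=
    fun w => spaths_finite.subset fun p hp => hp.1
  have hT : {p | p ∈ SPaths E s t ∧ v ∈ (s :: p) ∧ v ≠ s ∧ v ≠ t}.Finite :=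
    spaths_finite.subset fun p hp => hp.1
  have hset := thru_set_eq (E := E) (s := s) hvs t
  have key : hT.toFinset =
      (Set.toFinite {u : V | E v u ∧ dEDist E s u = dEDist E s v + 1}).toFinset.biUnion
        (fun w => (hfin w).toFinset) := by
    ext p
    simp only [Set.Finite.mem_toFinset, Finset.mem_biUnion, Set.Finite.mem_toFinset]
    rw [Set.ext_iff.mp hset p]
    simp [Set.mem_iUnion]
  have h1 : numSPThru E s t v = hT.toFinset.card := by
    unfold numSPThru
    exact Set.ncard_eq_toFinset_card _ hT
  rw [h1, key, Finset.card_biUnion]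
  · exact Finset.sum_congr rfl fun w _ => (Set.ncard_eq_toFinset_card _ (hfin w)).symm
  · intro w₁ h₁ w₂ h₂ hne
    rw [Function.onFun, Finset.disjoint_left]
    intro p hp₁ hp₂
    rw [Set.Finite.mem_toFinset] at hp₁ hp₂
    exact hne (edge_unique hp₁ hp₂)

theorem per_t [Fintype V] [DecidableEq V] (hvs : v ≠ s) (hv : dEDist E s v ≠ ⊤) (t : V) :
    pairDep E s t v =
      ∑ w ∈ (Set.toFinite {u : V | E v u ∧ dEDist E s u = dEDist E s v + 1}).toFinset,
        (numSP E s v : ℝ) / (numSP E s w : ℝ) *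
          (pairDep E s t w + if w = t then 1 else 0) := by
  classical
  set S := {u : V | E v u ∧ dEDist E s u = dEDist E s v + 1} with hS
  have hdw : ∀ w ∈ (Set.toFinite S).toFinset, dEDist E s w ≠ ⊤ := by
    intro w hw
    rw [Set.Finite.mem_toFinset] at hw
    rw [hw.2]
    exact WithTop.add_ne_top.mpr ⟨hv, by exact ENat.one_ne_top⟩
  have hσw : ∀ w ∈ (Set.toFinite S).toFinset, 0 < numSP E s w :=
    fun w hw => numSP_pos (hdw w hw)
  by_cases hσt : 0 < numSP E s t
  · have hLHS : pairDep E s t v = (numSPThru E s t v : ℝ) / (numSP E s t : ℝ) := if_pos hσt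
    rw [hLHS, card_thru_sum hvs t]
    push_cast
    rw [Finset.sum_div]
    refine Finset.sum_congr rfl fun w hw => ?_
    have hwS := Set.Finite.mem_toFinset (Set.toFinite S) |>.mp hw
    have hce := card_edge (E := E) (s := s) t hwS.1 hwS.2
    have hσwpos := hσw w hw
    rcases eq_or_ne w t with rfl | hwt
    · -- w = t
      rw [pairDep_self_right, suf_self (hdw w hw)] at *
      rw [hce]
      simp only [Set.ncard_singleton, if_true]
      rw [zero_add, mul_one]
      simp
    · -- w ≠ t
      have hws : w ≠ s := succ_ne_source hwS.2
      have hthru : numSPThru E s t w = numSP E s w * (Suf E s w t).ncard := by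
        rw [← card_thru_w t (hdw w hw)]
        unfold numSPThru
        congr 1
        ext p
        simp only [Set.mem_setOf_eq, Set.mem_sep_iff]
        exact ⟨fun h => ⟨h.1, h.2.1⟩, fun h => ⟨h.1, h.2, hws, hwt⟩⟩
      rw [hce, if_neg hwt, add_zero]
      have hpd : pairDep E s t w = (numSPThru E s t w : ℝ) / (numSP E s t : ℝ) := if_pos hσt
      rw [hpd, hthru]
      push_cast
      have h1 : (numSP E s w : ℝ) ≠ 0 := Nat.cast_ne_zero.mpr hσwpos.ne'
      have h2 : (numSP E s t : ℝ) ≠ 0 := Nat.cast_ne_zero.mpr hσt.ne'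
      field_simp
  · rw [pairDep, if_neg hσt]
    refine (Finset.sum_eq_zero fun w hw => ?_).symm
    have hwt : w ≠ t := by
      rintro rfl
      exact hσt (hσw w hw)
    rw [pairDep, if_neg hσt, if_neg hwt]
    simp


end Brandes

/-- Brandes' recursion: for `v ≠ s` reachable from `s`,
`δ(s|v) = Σ_{w : (v,w) ∈ E, d(s,w) = d(s,v)+1} (σ(s,v)/σ(s,w)) · (1 + δ(s|w))`. -/
theorem brandes_dependency_recursion {V : Type*} [Fintype V] (E : V → V → Prop) (s v : V)
    (hvs : v ≠ s) (hreach : Relation.ReflTransGen E s v) :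
    oneDep E s v =
      ∑ᶠ u ∈ {u : V | E v u ∧ dEDist E s u = dEDist E s v + 1},
        ((numSP E s v : ℝ) / (numSP E s u : ℝ)) * (1 + oneDep E s u) := by
  classical
  have hv := Brandes.dEDist_ne_top hreach
  have hfin : {u : V | E v u ∧ dEDist E s u = dEDist E s v + 1}.Finite :=
    Set.toFinite _
  have hcoe := finsum_mem_coe_finset
    (fun u => ((numSP E s v : ℝ) / (numSP E s u : ℝ)) * (1 + oneDep E s u)) hfin.toFinset
  rw [Set.Finite.coe_toFinset] at hcoe
  rw [hcoe]
  calc oneDep E s v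
      = ∑ t : V, ∑ w ∈ (Set.toFinite {u : V | E v u ∧ dEDist E s u = dEDist E s v + 1}).toFinset,
          (numSP E s v : ℝ) / (numSP E s w : ℝ) *
            (pairDep E s t w + if w = t then (1:ℝ) else 0) :=
        Finset.sum_congr rfl fun t _ => Brandes.per_t hvs hv t
    _ = ∑ w ∈ (Set.toFinite {u : V | E v u ∧ dEDist E s u = dEDist E s v + 1}).toFinset,
          ∑ t : V, (numSP E s v : ℝ) / (numSP E s w : ℝ) *
            (pairDep E s t w + if w = t then (1:ℝ) else 0) := Finset.sum_comm
    _ = ∑ w ∈ hfin.toFinset,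
          (numSP E s v : ℝ) / (numSP E s w : ℝ) * (1 + oneDep E s w) := by
        refine Finset.sum_congr rfl fun w _ => ?_
        rw [← Finset.mul_sum, Finset.sum_add_distrib]
        congr 1
        rw [add_comm]
        congr 1
        simp [Finset.sum_ite_eq]
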